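/- Let q ∈ (0,1/2) be irrational with associated sequence (κ_i(q)). Suppose i, N ∈ ℕ satisfy κ_{i+1}(q)…κ_{i+N}(q) = κ_1(q)…κ_N(q) and κ_{i+N+1}(q) ≠ κ_{N+1}(q). Then κ_1(q)…κ_{N+1}(q) is a palindrome, and moreover κ_{i+N+2}(q) = κ_1(q). -/

import Mathlib

/-- `κ_i(q)`: `κ_1(q) = ⌊1/q⌋ − 1` and `κ_i(q) = ⌊i/q⌋ − ⌊(i−1)/q⌋ − 2` for `i ≥ 2`. -/
noncomputable def kappaZ (q : ℝ) (i : ℕ) : ℤ :=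
  if i = 1 then ⌊1 / q⌋ - 1 else ⌊(i : ℝ) / q⌋ - ⌊((i : ℝ) - 1) / q⌋ - 2

namespace KappaAux

/-- fractional part of `m/q` -/
noncomputable def fr (q : ℝ) (m : ℕ) : ℝ := Int.fract ((m : ℝ) / q)

lemma fr_nonneg (q : ℝ) (m : ℕ) : 0 ≤ fr q m := Int.fract_nonneg _

lemma fr_lt_one (q : ℝ) (m : ℕ) : fr q m < 1 := Int.fract_lt_one _

lemma fr_pos (q : ℝ) (hirr : Irrational q) (m : ℕ) (hm : 1 ≤ m) : 0 < fr q m := by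
  have hirr' : Irrational ((m : ℝ) / q) := hirr.natCast_div (by omega)
  refine Int.fract_pos.mpr fun h => hirr'.ne_int _ h

lemma floor_eq (q : ℝ) (m : ℕ) : (⌊(m : ℝ) / q⌋ : ℝ) = (m : ℝ) / q - fr q m :=
  (Int.self_sub_fract _).symm

lemma fract_sub_one (y : ℝ) (h1 : 1 ≤ y) (h2 : y < 2) : Int.fract y = y - 1 := by
  have h := (Int.fract_sub_intCast y 1).symm
  rw [h, Int.fract_eq_self.mpr ⟨by push_cast; linarith, by push_cast; linarith⟩]
  push_cast; ring

lemma fr_add (q : ℝ) (m n : ℕ) : fr q (m + n) = Int.fract (fr q m + fr q n) := by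
  have h1 : ((m + n : ℕ) : ℝ) / q =
      (fr q m + fr q n) + ((⌊(m : ℝ) / q⌋ + ⌊(n : ℝ) / q⌋ : ℤ) : ℝ) := by
    push_cast
    rw [floor_eq q m, floor_eq q n]
    ring
  rw [fr, h1, Int.fract_add_intCast]

lemma kappa_succ (q : ℝ) (m : ℕ) (hm : 1 ≤ m) :
    kappaZ q (m + 1) = ⌊((m + 1 : ℕ) : ℝ) / q⌋ - ⌊(m : ℝ) / q⌋ - 2 := by
  have h : (((m + 1 : ℕ)) : ℝ) - 1 = (m : ℝ) := by push_cast; ring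
  rw [kappaZ, if_neg (by omega), h]

lemma floor_one_div (q : ℝ) : (⌊1 / q⌋ : ℝ) = 1 / q - fr q 1 := by
  have := floor_eq q 1
  norm_num at this ⊢
  exact this

/-- the letter lemma -/
lemma letter (q : ℝ) (hirr : Irrational q) (j : ℕ) (hj : 1 ≤ j) :
    kappaZ q j = if fr q j ≤ fr q 1 then ⌊1 / q⌋ - 1 else ⌊1 / q⌋ - 2 := by
  obtain ⟨m, rfl⟩ : ∃ m, j = m + 1 := ⟨j - 1, by omega⟩
  rcases Nat.eq_zero_or_pos m with rfl | hm
  · norm_num [kappaZ]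
  · have hk := kappa_succ q m hm
    have hadd := fr_add q m 1
    have hxm0 := fr_pos q hirr m hm
    have hxm1 := fr_lt_one q m
    have hx10 := fr_pos q hirr 1 le_rfl
    have hx11 := fr_lt_one q 1
    have hdiv : ((m + 1 : ℕ) : ℝ) / q = (m : ℝ) / q + ((1:ℕ) : ℝ) / q := by
      push_cast; ring
    rcases lt_trichotomy (fr q m + fr q 1) 1 with hlt | heq | hgt
    · have hx : fr q (m + 1) = fr q m + fr q 1 := by
        rw [hadd, Int.fract_eq_self.mpr ⟨by linarith, hlt⟩]
      rw [hk, if_neg (by push_neg; linarith)]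
      have key : (⌊((m + 1 : ℕ) : ℝ) / q⌋ : ℝ) - (⌊(m : ℝ) / q⌋ : ℝ) = (⌊1 / q⌋ : ℝ) := by
        rw [floor_eq, floor_eq, floor_one_div]
        have h1 : ((1:ℕ) : ℝ) / q = 1 / q := by norm_num
        rw [← h1] at *
        linarith [hdiv]
      have : ⌊((m + 1 : ℕ) : ℝ) / q⌋ - ⌊(m : ℝ) / q⌋ = ⌊1 / q⌋ := by exact_mod_cast key
      omega
    · exfalso
      have : fr q (m + 1) = 0 := by rw [hadd, heq, Int.fract_one]
      exact absurd this (ne_of_gt (fr_pos q hirr (m + 1) (by omega)))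
    · have hx : fr q (m + 1) = fr q m + fr q 1 - 1 := by
        rw [hadd, fract_sub_one _ hgt.le (by linarith)]
      rw [hk, if_pos (by linarith)]
      have key : (⌊((m + 1 : ℕ) : ℝ) / q⌋ : ℝ) - (⌊(m : ℝ) / q⌋ : ℝ) = (⌊1 / q⌋ : ℝ) + 1 := by
        rw [floor_eq, floor_eq, floor_one_div]
        have h1 : ((1:ℕ) : ℝ) / q = 1 / q := by norm_num
        rw [← h1] at *
        linarith [hdiv]
      have : ⌊((m + 1 : ℕ) : ℝ) / q⌋ - ⌊(m : ℝ) / q⌋ = ⌊1 / q⌋ + 1 := by exact_mod_cast key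
      omega

end KappaAux

open KappaAux

/-- If `κ_{i+1}(q)…κ_{i+N}(q) = κ_1(q)…κ_N(q)` and `κ_{i+N+1}(q) ≠ κ_{N+1}(q)`
for irrational `q ∈ (0,1/2)`, then `κ_1(q)…κ_{N+1}(q)` is a palindrome and
`κ_{i+N+2}(q) = κ_1(q)`. -/
theorem kappa_palindrome (q : ℝ) (hq0 : 0 < q) (hq2 : q < 1 / 2)
    (hirr : Irrational q) (i N : ℕ) (hi : 1 ≤ i) (hN : 1 ≤ N)
    (h1 : ∀ j, 1 ≤ j → j ≤ N → kappaZ q (i + j) = kappaZ q j)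
    (h2 : kappaZ q (i + N + 1) ≠ kappaZ q (N + 1)) :
    (∀ j, 1 ≤ j → j ≤ N + 1 → kappaZ q j = kappaZ q (N + 2 - j)) ∧
      kappaZ q (i + N + 2) = kappaZ q 1 := by
  -- telescoped floor identity
  have hone : ((1 : ℕ) : ℝ) / q = 1 / q := by norm_num
  have hQ : ∀ j : ℕ, 1 ≤ j → j ≤ N →
      ⌊((i + j : ℕ) : ℝ) / q⌋ = ⌊(i : ℝ) / q⌋ + ⌊((j : ℕ) : ℝ) / q⌋ + 1 := by
    intro j
    induction j with
    | zero => omega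
    | succ m ih =>
      intro _ hjN
      rcases Nat.eq_zero_or_pos m with rfl | hm
      · have h := h1 1 le_rfl (by omega)
        rw [kappa_succ q i hi] at h
        have h2' : kappaZ q 1 = ⌊1 / q⌋ - 1 := by simp [kappaZ]
        rw [h2'] at h
        simp only [Nat.zero_add]
        rw [hone]
        omega
      · have ihm := ih hm (by omega)
        have h := h1 (m + 1) (by omega) hjN
        rw [kappa_succ q m hm] at h
        have hidx : i + (m + 1) = (i + m) + 1 := by omega
        rw [hidx, kappa_succ q (i + m) (by omega)] at h
        have hidx2 : (i + (m + 1)) = (i + m) + 1 := by omega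
        rw [hidx2]
        omega
  have hsum : ∀ j : ℕ, 1 ≤ j → j ≤ N → fr q i + fr q j = 1 + fr q (i + j) := by
    intro j hj1 hjN
    have h := hQ j hj1 hjN
    have h' : (⌊((i + j : ℕ) : ℝ) / q⌋ : ℝ) = (⌊(i : ℝ) / q⌋ : ℝ) + (⌊((j : ℕ) : ℝ) / q⌋ : ℝ) + 1 := by
      exact_mod_cast h
    have hdiv : ((i + j : ℕ) : ℝ) / q = (i : ℝ) / q + ((j : ℕ) : ℝ) / q := by push_cast; ring
    rw [floor_eq, floor_eq, floor_eq] at h'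
    have hfq : fr q i = Int.fract ((i : ℝ) / q) := rfl
    linarith [h', hdiv]
  have hxpos : ∀ m : ℕ, 1 ≤ m → 0 < fr q m := fun m hm => fr_pos q hirr m hm
  have hH2 : fr q i + fr q (N + 1) < 1 := by
    rcases lt_trichotomy (fr q i + fr q (N + 1)) 1 with h | h | h
    · exact h
    · exfalso
      have h0 : fr q (i + (N + 1)) = 0 := by rw [fr_add, h, Int.fract_one]
      exact absurd h0 (ne_of_gt (hxpos _ (by omega)))
    · exfalso
      apply h2
      have hcomp : fr q (i + (N + 1)) = fr q i + fr q (N + 1) - 1 := by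
        rw [fr_add, fract_sub_one _ h.le (by linarith [fr_lt_one q i, fr_lt_one q (N + 1)])]
      have hdiv : ((i + (N + 1) : ℕ) : ℝ) / q = (i : ℝ) / q + ((N + 1 : ℕ) : ℝ) / q := by
        push_cast; ring
      have hG : ⌊((i + (N + 1) : ℕ) : ℝ) / q⌋ = ⌊(i : ℝ) / q⌋ + ⌊((N + 1 : ℕ) : ℝ) / q⌋ + 1 := by
        have key : (⌊((i + (N + 1) : ℕ) : ℝ) / q⌋ : ℝ)
            = (⌊(i : ℝ) / q⌋ : ℝ) + (⌊((N + 1 : ℕ) : ℝ) / q⌋ : ℝ) + 1 := by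
          rw [floor_eq, floor_eq, floor_eq]
          linarith [hcomp, hdiv]
        exact_mod_cast key
      have e1 : kappaZ q (i + N + 1) = ⌊((i + N + 1 : ℕ) : ℝ) / q⌋ - ⌊((i + N : ℕ) : ℝ) / q⌋ - 2 :=
        kappa_succ q (i + N) (by omega)
      have e2 : kappaZ q (N + 1) = ⌊((N + 1 : ℕ) : ℝ) / q⌋ - ⌊((N : ℕ) : ℝ) / q⌋ - 2 :=
        kappa_succ q N hN
      have e3 := hQ N hN le_rfl
      have hidx : i + (N + 1) = i + N + 1 := by omega
      rw [hidx] at hG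
      rw [e1, e2]
      omega
  have hs : 1 - fr q i < fr q 1 := by
    have h := hsum 1 le_rfl hN
    have := hxpos (i + 1) (by omega)
    linarith
  have hge : ∀ m : ℕ, 1 ≤ m → m ≤ N + 1 → fr q (N + 1) ≤ fr q m := by
    intro m hm1 hm2
    rcases Nat.eq_or_lt_of_le hm2 with heq | hlt
    · rw [heq]
    · have h := hsum m hm1 (by omega)
      have := hxpos (i + m) (by omega)
      linarith [hH2]
  constructor
  · intro j hj1 hj2
    set k := N + 2 - j with hk
    have hk1 : 1 ≤ k := by omega
    have hk2 : k ≤ N + 1 := by omega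
    have hjkn : j + k = N + 2 := by omega
    have hcast : (j : ℝ) + (k : ℝ) = ((N + 1 : ℕ) : ℝ) + ((1 : ℕ) : ℝ) := by
      have : ((j + k : ℕ) : ℝ) = ((N + 2 : ℕ) : ℝ) := by exact_mod_cast congrArg Nat.cast hjkn
      push_cast at this ⊢
      linarith
    have hdiv : (j : ℝ) / q + (k : ℝ) / q = ((N + 1 : ℕ) : ℝ) / q + ((1 : ℕ) : ℝ) / q := by
      rw [← add_div, ← add_div, hcast]
    set D : ℤ := ⌊((N + 1 : ℕ) : ℝ) / q⌋ + ⌊((1 : ℕ) : ℝ) / q⌋ - ⌊(j : ℝ) / q⌋ - ⌊(k : ℝ) / q⌋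
      with hDdef
    have hD : (D : ℝ) = fr q j + fr q k - fr q (N + 1) - fr q 1 := by
      rw [hDdef, Int.cast_sub, Int.cast_sub, Int.cast_add,
        floor_eq, floor_eq, floor_eq, floor_eq]
      linarith [hdiv]
    have hgej := hge j hj1 hj2
    have hgek := hge k hk1 hk2
    have hxk := hxpos k hk1
    have hx1 := hxpos 1 le_rfl
    have hxN1 := hxpos (N + 1) (by omega)
    have hb1 : (-1 : ℝ) < (D : ℝ) := by
      rw [hD]; linarith [fr_lt_one q 1]
    have hb2 : (D : ℝ) < 2 := by
      rw [hD]; linarith [fr_lt_one q j, fr_lt_one q k]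
    have hD01 : D = 0 ∨ D = 1 := by
      have h1' : (-1 : ℤ) < D := by exact_mod_cast hb1
      have h2' : D < 2 := by exact_mod_cast hb2
      omega
    rcases hD01 with h0 | h01
    · have hsum0 : fr q j + fr q k = fr q (N + 1) + fr q 1 := by
        rw [h0] at hD; push_cast at hD; linarith
      rw [letter q hirr j hj1, letter q hirr k hk1,
        if_pos (by linarith : fr q j ≤ fr q 1), if_pos (by linarith : fr q k ≤ fr q 1)]
    · have hsum1 : fr q j + fr q k = fr q (N + 1) + fr q 1 + 1 := by
        rw [h01] at hD; push_cast at hD; linarith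
      rw [letter q hirr j hj1, letter q hirr k hk1,
        if_neg (by push_neg; linarith [fr_lt_one q k] : ¬ fr q j ≤ fr q 1),
        if_neg (by push_neg; linarith [fr_lt_one q j] : ¬ fr q k ≤ fr q 1)]
  · have hx1 := hxpos 1 le_rfl
    have hxN1 := hxpos (N + 1) (by omega)
    have hkey : fr q (i + N + 2) = fr q i + fr q (N + 1) + fr q 1 - 1 := by
      have hidx : i + N + 2 = (i + (N + 1)) + 1 := by omega
      rw [hidx, fr_add q (i + (N + 1)) 1, fr_add q i (N + 1),
        Int.fract_eq_self.mpr ⟨add_nonneg (fr_nonneg q i) (fr_nonneg q (N + 1)), hH2⟩,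
        fract_sub_one _ (by linarith) (by linarith [fr_lt_one q 1])]
    have hle : fr q (i + N + 2) ≤ fr q 1 := by rw [hkey]; linarith
    rw [letter q hirr (i + N + 2) (by omega), if_pos hle]
    simp [kappaZ]
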